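/- Let p₁ < ⋯ < p_n be 'widely-spaced' positive reals (p₁ > m, p_{i+1} > m p_i²). If two multisets S and T, each consisting of m products of pairs p_a p_b (with repetition allowed), have equal sums Σ S = Σ T, then S = T as multisets. -/
import Mathlib


/-- For widely-spaced positive reals, two multisets of m pairwise products
p_a·p_b with equal sums must be equal as multisets. -/
theorem stmt17 (m : ℕ) (hm : 0 < m) (p : ℕ → ℝ)
    (hpos : ∀ i, 0 < p i)
    (h0 : (m : ℝ) < p 0)
    (hrec : ∀ i, (m : ℝ) * (p i) ^ 2 < p (i + 1))
    (S T : Multiset ℝ)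
    (hScard : Multiset.card S = m) (hTcard : Multiset.card T = m)
    (hS : ∀ x ∈ S, ∃ a b : ℕ, a ≤ b ∧ x = p a * p b)
    (hT : ∀ x ∈ T, ∃ a b : ℕ, a ≤ b ∧ x = p a * p b)
    (hsum : S.sum = T.sum) :
    S = T := by
  have hm1 : (1 : ℝ) ≤ m := by exact_mod_cast hm
  have hm0 : (0 : ℝ) < m := by linarith
  -- every p i exceeds m
  have hbig : ∀ i, (m : ℝ) < p i := by
    intro i
    induction i with
    | zero => exact h0
    | succ n ih => have := hrec n; nlinarith [hpos n]
  have hp1 : ∀ i, 1 ≤ p i := fun i => by nlinarith [hbig i]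
  -- p is strictly monotone
  have hmono : StrictMono p := by
    apply strictMono_nat_of_lt_succ
    intro i
    have := hrec i
    nlinarith [hp1 i]
  have hmono' : ∀ i j : ℕ, i ≤ j → p i ≤ p j := fun i j h => hmono.monotone h
  -- positivity of products
  have hprodpos : ∀ a b : ℕ, 0 < p a * p b := fun a b => mul_pos (hpos a) (hpos b)
  -- key lemma: strictly smaller product is smaller even after multiplying by m
  have key : ∀ a b c d : ℕ, a ≤ b → c ≤ d → p c * p d < p a * p b →
      (m : ℝ) * (p c * p d) < p a * p b := by
    intro a b c d hab hcd hlt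
    rcases lt_trichotomy d b with h | h | h
    · -- d < b
      have h1 : (m : ℝ) * (p c * p d) ≤ m * (p d * p d) := by
        have hle : p c ≤ p d := hmono' c d hcd
        exact mul_le_mul_of_nonneg_left
          (mul_le_mul_of_nonneg_right hle (hpos d).le) hm0.le
      have h2 : (m : ℝ) * (p d * p d) < p (d + 1) := by
        have := hrec d; nlinarith
      have h3 : p (d + 1) ≤ p b := hmono' _ _ h
      have h4 : p b ≤ p a * p b := by nlinarith [hp1 a, hpos b]
      linarith
    · -- d = b
      subst h
      have hca : p c < p a := by
        have := hpos d
        exact lt_of_mul_lt_mul_right hlt (le_of_lt this)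
      have hca' : c < a := by
        by_contra hcon
        push_neg at hcon
        linarith [hmono' a c hcon]
      have h1 : (m : ℝ) * p c < p (c + 1) := by
        have h2 := hrec c
        nlinarith [mul_nonneg (mul_nonneg hm0.le (hpos c).le)
          (sub_nonneg.mpr (hp1 c))]
      have h2 : p (c + 1) ≤ p a := hmono' _ _ hca'
      have := hpos d
      nlinarith
    · -- b < d : impossible
      exfalso
      have h1 : p a * p b ≤ p b * p b := by
        have : p a ≤ p b := hmono' a b hab
        nlinarith [hpos b]
      have h2 : (m : ℝ) * (p b) ^ 2 < p (b + 1) := hrec b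
      have h3 : p (b + 1) ≤ p d := hmono' _ _ h
      have h4 : p d ≤ p c * p d := by nlinarith [hp1 c, hpos d]
      nlinarith [hpos b]
  -- existence of a maximum element in a nonempty multiset
  have hmax : ∀ M : Multiset ℝ, M ≠ 0 → ∃ x ∈ M, ∀ y ∈ M, y ≤ x := by
    intro M
    induction M using Multiset.induction with
    | empty => intro h; exact absurd rfl h
    | cons a s ih =>
      intro _
      rcases eq_or_ne s 0 with rfl | hs
      · exact ⟨a, Multiset.mem_cons_self a 0, by intro y hy; simp at hy; simp [hy]⟩
      · obtain ⟨x, hxs, hxmax⟩ := ih hs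
        rcases le_total a x with h | h
        · exact ⟨x, Multiset.mem_cons_of_mem hxs, by
            intro y hy
            rcases Multiset.mem_cons.mp hy with rfl | hy'
            · exact h
            · exact hxmax y hy'⟩
        · exact ⟨a, Multiset.mem_cons_self a s, by
            intro y hy
            rcases Multiset.mem_cons.mp hy with rfl | hy'
            · exact le_rfl
            · exact (hxmax y hy').trans h⟩
  -- claim: the maximum must be in both multisets
  have claim : ∀ A B : Multiset ℝ, Multiset.card B ≤ m →
      (∀ y ∈ A, ∃ a b : ℕ, a ≤ b ∧ y = p a * p b) →
      (∀ y ∈ B, ∃ a b : ℕ, a ≤ b ∧ y = p a * p b) →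
      A.sum = B.sum → ∀ x ∈ A, (∀ y ∈ B, y ≤ x) → x ∈ B := by
    intro A B hBcard hA hB hsumAB x hxA hxmax
    by_contra hxB
    have hx0 : 0 < x := by
      obtain ⟨a, b, hab, rfl⟩ := hA x hxA
      exact hprodpos a b
    have hAsum : x ≤ A.sum := by
      apply Multiset.single_le_sum _ _ hxA
      intro y hy
      obtain ⟨a, b, hab, rfl⟩ := hA y hy
      exact le_of_lt (hprodpos a b)
    have hy : ∀ y ∈ B, (m : ℝ) * y < x := by
      intro y hyB
      have hlt : y < x := lt_of_le_of_ne (hxmax y hyB) (by rintro rfl; exact hxB hyB)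
      obtain ⟨a, b, hab, hxeq⟩ := hA x hxA
      obtain ⟨c, d, hcd, hyeq⟩ := hB y hyB
      subst hxeq; subst hyeq
      exact key a b c d hab hcd hlt
    have hBsum : B.sum < x := by
      rcases eq_or_ne B 0 with rfl | hBne
      · simpa using hx0
      · obtain ⟨y0, hy0⟩ := Multiset.exists_mem_of_ne_zero hBne
        have hrw : B = y0 ::ₘ B.erase y0 := (Multiset.cons_erase hy0).symm
        have hcard1 : 1 ≤ Multiset.card B := by
          rw [hrw]; simp [Nat.succ_le_succ]
        have hES : (B.erase y0).sum ≤ (Multiset.card (B.erase y0) : ℕ) • (x / m) := by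
          apply Multiset.sum_le_card_nsmul
          intro y hyE
          have := hy y (Multiset.mem_of_mem_erase hyE)
          rw [le_div_iff₀ hm0]; linarith
        have hcE : (Multiset.card (B.erase y0) : ℝ) ≤ ((m : ℝ) - 1) := by
          have h1 : Multiset.card (B.erase y0) = Multiset.card B - 1 :=
            Multiset.card_erase_of_mem hy0
          have h2 : (Multiset.card B : ℝ) ≤ m := by exact_mod_cast hBcard
          have h3 : (Multiset.card (B.erase y0) : ℝ) = (Multiset.card B : ℝ) - 1 := by
            rw [h1, Nat.cast_sub hcard1]; simp
          linarith
        have hy0x : y0 < x / m := by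
          have := hy y0 hy0
          rw [lt_div_iff₀ hm0]; linarith
        have hxm : 0 ≤ x / m := le_of_lt (div_pos hx0 hm0)
        have hsumB : B.sum = y0 + (B.erase y0).sum := by
          conv_lhs => rw [hrw]
          exact Multiset.sum_cons y0 _
        rw [nsmul_eq_mul] at hES
        have hx' : (m : ℝ) * (x / m) = x := by field_simp
        calc B.sum = y0 + (B.erase y0).sum := hsumB
          _ < x / m + ((m : ℝ) - 1) * (x / m) := by
              have : (Multiset.card (B.erase y0) : ℝ) * (x / m) ≤ ((m : ℝ) - 1) * (x / m) :=
                mul_le_mul_of_nonneg_right hcE hxm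
              linarith
          _ = (m : ℝ) * (x / m) := by ring
          _ = x := hx'
    linarith [hsumAB]
  -- main induction
  suffices H : ∀ k : ℕ, ∀ S T : Multiset ℝ, Multiset.card S = k → Multiset.card T = k →
      k ≤ m → (∀ x ∈ S, ∃ a b : ℕ, a ≤ b ∧ x = p a * p b) →
      (∀ x ∈ T, ∃ a b : ℕ, a ≤ b ∧ x = p a * p b) → S.sum = T.sum → S = T by
    exact H m S T hScard hTcard le_rfl hS hT hsum
  intro k
  induction k with
  | zero =>
    intro S T hSc hTc _ _ _ _
    rw [Multiset.card_eq_zero] at hSc hTc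
    rw [hSc, hTc]
  | succ k ih =>
    intro S T hSc hTc hkm hS hT hsum
    have hSTne : S + T ≠ 0 := by
      intro h
      have : Multiset.card (S + T) = 0 := by rw [h]; rfl
      rw [Multiset.card_add, hSc, hTc] at this
      omega
    obtain ⟨x, hxmem, hxmax⟩ := hmax (S + T) hSTne
    have hxS_and_T : x ∈ S ∧ x ∈ T := by
      rcases Multiset.mem_add.mp hxmem with hxS | hxT
      · refine ⟨hxS, ?_⟩
        exact claim S T (by omega) hS hT hsum x hxS
          (fun y hy => hxmax y (Multiset.mem_add.mpr (Or.inr hy)))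
      · refine ⟨?_, hxT⟩
        exact claim T S (by omega) hT hS hsum.symm x hxT
          (fun y hy => hxmax y (Multiset.mem_add.mpr (Or.inl hy)))
    obtain ⟨hxS, hxT⟩ := hxS_and_T
    have hScons : S = x ::ₘ S.erase x := (Multiset.cons_erase hxS).symm
    have hTcons : T = x ::ₘ T.erase x := (Multiset.cons_erase hxT).symm
    have hEsum : (S.erase x).sum = (T.erase x).sum := by
      have h1 : S.sum = x + (S.erase x).sum := by
        conv_lhs => rw [hScons]
        exact Multiset.sum_cons x _
      have h2 : T.sum = x + (T.erase x).sum := by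
        conv_lhs => rw [hTcons]
        exact Multiset.sum_cons x _
      rw [h1, h2] at hsum
      linarith
    have hE : S.erase x = T.erase x := by
      apply ih
      · rw [Multiset.card_erase_of_mem hxS, hSc]; rfl
      · rw [Multiset.card_erase_of_mem hxT, hTc]; rfl
      · omega
      · exact fun y hy => hS y (Multiset.mem_of_mem_erase hy)
      · exact fun y hy => hT y (Multiset.mem_of_mem_erase hy)
      · exact hEsum
    rw [hScons, hTcons, hE]
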